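/- arXiv:2412.10125 — 7 statements merged into one kernel-verified Lean document; each statement's English description precedes it below -/
import Mathlib

section
/- Let H be a real Hilbert space, let A₁, A₂ : H → H be bounded non-negative linear operators, let τ > 0, and let B₁, B₂ : H → H be bounded linear operators with Bℓ ∘ (I + τAℓ) = I = (I + τAℓ) ∘ Bℓ for ℓ = 1, 2. Define the Douglas–Rachford splitting operator S := B₂ ∘ B₁ ∘ (I + τ² A₁A₂). Then for every natural number n and every v ∈ H one has ‖Sⁿ(B₂ v)‖ ≤ ‖v‖, i.e. ‖Sⁿ ∘ (I + τA₂)^{-1}‖ ≤ 1. -/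
open scoped InnerProductSpace

section Aux

variable {H : Type*} [NormedAddCommGroup H] [InnerProductSpace ℝ H]

/-- The resolvent of a nonnegative operator is nonexpansive. -/
lemma resolvent_nonexpansive (A B : H →L[ℝ] H)
    (hA : ∀ v : H, 0 ≤ ⟪A v, v⟫_ℝ) (τ : ℝ) (hτ : 0 < τ)
    (hB' : (1 + τ • A : H →L[ℝ] H).comp B = 1) (x : H) : ‖B x‖ ≤ ‖x‖ := by
  have hx : B x + τ • A (B x) = x := by
    have := congrArg (fun f : H →L[ℝ] H => f x) hB'
    simpa [ContinuousLinearMap.comp_apply, ContinuousLinearMap.add_apply,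
      ContinuousLinearMap.smul_apply] using this
  set u := B x with hu
  have hsq : ‖x‖ ^ 2 = ‖u‖ ^ 2 + 2 * τ * ⟪A u, u⟫_ℝ + τ ^ 2 * ‖A u‖ ^ 2 := by
    rw [← hx]
    rw [show u + τ • A u = u + τ • A u from rfl]
    rw [norm_add_sq_real, real_inner_smul_right, norm_smul]
    rw [Real.norm_eq_abs, abs_of_pos hτ, mul_pow, real_inner_comm]
    ring
  have h1 : 0 ≤ ⟪A u, u⟫_ℝ := hA u
  nlinarith [norm_nonneg u, norm_nonneg x, sq_nonneg (‖A u‖), sq_nonneg τ]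

/-- Key estimate: `B₁ ∘ (I + τ²A₁A₂) ∘ B₂` is nonexpansive. -/
lemma key_nonexpansive (A₁ A₂ B₁ B₂ : H →L[ℝ] H)
    (hA₁ : ∀ v : H, 0 ≤ ⟪A₁ v, v⟫_ℝ) (hA₂ : ∀ v : H, 0 ≤ ⟪A₂ v, v⟫_ℝ)
    (τ : ℝ) (hτ : 0 < τ)
    (hB₁' : (1 + τ • A₁ : H →L[ℝ] H).comp B₁ = 1)
    (hB₂' : (1 + τ • A₂ : H →L[ℝ] H).comp B₂ = 1) (x : H) :
    ‖B₁ (B₂ x + τ ^ 2 • A₁ (A₂ (B₂ x)))‖ ≤ ‖x‖ := by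
  set w := B₂ x with hw
  set a := A₂ w with ha
  have hx : w + τ • a = x := by
    have := congrArg (fun f : H →L[ℝ] H => f x) hB₂'
    simpa [ContinuousLinearMap.comp_apply, ContinuousLinearMap.add_apply,
      ContinuousLinearMap.smul_apply, ← hw, ← ha] using this
  set u := B₁ (w + τ ^ 2 • A₁ a) with hu
  have hres : u + τ • A₁ u = w + τ ^ 2 • A₁ a := by
    have := congrArg (fun f : H →L[ℝ] H => f (w + τ ^ 2 • A₁ a)) hB₁'
    simpa [ContinuousLinearMap.comp_apply, ContinuousLinearMap.add_apply,
      ContinuousLinearMap.smul_apply, ← hu] using this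
  set x' := u - τ • a with hx'
  set b := A₁ x' with hb
  have hwu : w = u + τ • b := by
    have h1 : w = u + τ • A₁ u - τ ^ 2 • A₁ a := by rw [hres]; abel
    rw [h1, hb, hx', map_sub, map_smul, smul_sub, smul_smul, ← sq]; abel
  have hxu : x = u + τ • (b + a) := by
    rw [← hx, hwu, smul_add]; abel
  have hinner : ⟪u, b + a⟫_ℝ = ⟪b, x'⟫_ℝ + ⟪a, w⟫_ℝ := by
    rw [hwu, hx']
    simp only [inner_add_right, inner_add_left, inner_sub_left, inner_sub_right,
      real_inner_smul_left, real_inner_smul_right]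
    rw [real_inner_comm b u, real_inner_comm b a, real_inner_comm a u]
    ring
  have hsq : ‖x‖ ^ 2 = ‖u‖ ^ 2 + 2 * τ * (⟪b, x'⟫_ℝ + ⟪a, w⟫_ℝ) + τ ^ 2 * ‖b + a‖ ^ 2 := by
    rw [hxu, norm_add_sq_real, real_inner_smul_right, hinner, norm_smul,
      Real.norm_eq_abs, abs_of_pos hτ, mul_pow]
    ring
  have h1 : 0 ≤ ⟪b, x'⟫_ℝ := hA₁ x'
  have h2 : 0 ≤ ⟪a, w⟫_ℝ := hA₂ w
  nlinarith [norm_nonneg u, norm_nonneg x, sq_nonneg (‖b + a‖), hτ.le]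

end Aux

/-- Stability of the Douglas–Rachford splitting scheme: with `Bℓ = (I + τAℓ)⁻¹` and
`S = B₂ ∘ B₁ ∘ (I + τ²A₁A₂)`, one has `‖Sⁿ (B₂ v)‖ ≤ ‖v‖` for all `n` and `v`. -/
theorem douglasRachford_stability
    {H : Type*} [NormedAddCommGroup H] [InnerProductSpace ℝ H] [CompleteSpace H]
    (A₁ A₂ B₁ B₂ : H →L[ℝ] H)
    (hA₁ : ∀ v : H, 0 ≤ ⟪A₁ v, v⟫_ℝ) (hA₂ : ∀ v : H, 0 ≤ ⟪A₂ v, v⟫_ℝ)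
    (τ : ℝ) (hτ : 0 < τ)
    (hB₁ : B₁.comp (1 + τ • A₁) = 1) (hB₁' : (1 + τ • A₁ : H →L[ℝ] H).comp B₁ = 1)
    (hB₂ : B₂.comp (1 + τ • A₂) = 1) (hB₂' : (1 + τ • A₂ : H →L[ℝ] H).comp B₂ = 1) :
    ∀ (n : ℕ) (v : H),
      ‖((B₂.comp (B₁.comp (1 + τ ^ 2 • (A₁.comp A₂)))) ^ n) (B₂ v)‖ ≤ ‖v‖ := by
  intro n
  induction n with
  | zero =>
    intro v
    simpa using resolvent_nonexpansive A₂ B₂ hA₂ τ hτ hB₂' v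
  | succ n ih =>
    intro v
    have hstep : ((B₂.comp (B₁.comp (1 + τ ^ 2 • (A₁.comp A₂)))) ^ (n+1)) (B₂ v)
        = ((B₂.comp (B₁.comp (1 + τ ^ 2 • (A₁.comp A₂)))) ^ n)
            (B₂ (B₁ (B₂ v + τ ^ 2 • A₁ (A₂ (B₂ v))))) := by
      rw [pow_succ, ContinuousLinearMap.mul_apply]
      rfl
    rw [hstep]
    exact le_trans (ih _) (key_nonexpansive A₁ A₂ B₁ B₂ hA₁ hA₂ τ hτ hB₁' hB₂' v)
end

section
/- Let H be a real Hilbert space, let A₁, A₂ : H → H be bounded linear operators, let τ > 0, and let B₁, B₂ : H → H be bounded linear operators with Bℓ ∘ (I + τAℓ) = I = (I + τAℓ) ∘ Bℓ for ℓ = 1, 2. Define S := B₂ ∘ B₁ ∘ (I + τ² A₁A₂). Then for every natural number n one has the operator identity Sⁿ ∘ B₂ = B₂ ∘ ( (1/2) • (B₁ ∘ (I − τA₁) ∘ (I − τA₂) ∘ B₂) + (1/2) • I )ⁿ. -/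
set_option synthInstance.maxHeartbeats 1000000 in
private lemma dr_key {R : Type*} [Ring R] [Algebra ℝ R] (a b c d : R)
    (h1 : c * (1 + a) = 1) (h2 : (1 + b) * d = 1) :
    d * c * (1 + a * b) * d =
      d * ((1 / 2 : ℝ) • (c * (1 - a) * (1 - b) * d) + (1 / 2 : ℝ) • (1 : R)) := by
  have hs : (1 : R) + a * b
      = (1 / 2 : ℝ) • ((1 - a) * (1 - b)) + (1 / 2 : ℝ) • ((1 + a) * (1 + b)) := by
    have h : (1 - a) * (1 - b) + (1 + a) * (1 + b) = (2 : ℝ) • ((1 : R) + a * b) := by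
      rw [two_smul]; noncomm_ring
    calc (1 : R) + a * b = (1 / 2 : ℝ) • ((2 : ℝ) • ((1 : R) + a * b)) := by
          rw [smul_smul]; norm_num
      _ = (1 / 2 : ℝ) • ((1 - a) * (1 - b) + (1 + a) * (1 + b)) := by rw [h]
      _ = _ := by rw [smul_add]
  calc d * c * (1 + a * b) * d
      = (1 / 2 : ℝ) • (d * (c * (1 - a) * (1 - b) * d)) +
          (1 / 2 : ℝ) • (d * (c * (1 + a)) * ((1 + b) * d)) := by
        rw [hs, mul_add, add_mul, mul_smul_comm, mul_smul_comm, smul_mul_assoc,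
          smul_mul_assoc]
        congr 2 <;> noncomm_ring
    _ = (1 / 2 : ℝ) • (d * (c * (1 - a) * (1 - b) * d)) + (1 / 2 : ℝ) • (d * 1) := by
        rw [h1, h2, mul_one]
    _ = d * ((1 / 2 : ℝ) • (c * (1 - a) * (1 - b) * d) + (1 / 2 : ℝ) • (1 : R)) := by
        rw [mul_add, mul_smul_comm, mul_smul_comm, mul_one]

set_option synthInstance.maxHeartbeats 1000000 in
/-- Algebraic reformulation of the powers of the Douglas–Rachford splitting operator:
`Sⁿ ∘ B₂ = B₂ ∘ ((1/2) • (B₁ ∘ (I − τA₁) ∘ (I − τA₂) ∘ B₂) + (1/2) • I)ⁿ`, where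
`S = B₂ ∘ B₁ ∘ (1 + τ²A₁A₂)` and `Bℓ = (I + τAℓ)⁻¹`. -/
theorem douglasRachford_pow_reformulation
    {H : Type*} [NormedAddCommGroup H] [InnerProductSpace ℝ H] [CompleteSpace H]
    (A₁ A₂ B₁ B₂ : H →L[ℝ] H) (τ : ℝ) (hτ : 0 < τ)
    (hB₁ : B₁ * (1 + τ • A₁) = 1) (hB₁' : (1 + τ • A₁) * B₁ = 1)
    (hB₂ : B₂ * (1 + τ • A₂) = 1) (hB₂' : (1 + τ • A₂) * B₂ = 1) :
    ∀ n : ℕ,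
      (B₂ * B₁ * (1 + τ ^ 2 • (A₁ * A₂))) ^ n * B₂ =
        B₂ * (((1 / 2 : ℝ) • (B₁ * (1 - τ • A₁) * (1 - τ • A₂) * B₂) +
          (1 / 2 : ℝ) • (1 : H →L[ℝ] H)) ^ n) := by
  have hab : τ ^ 2 • (A₁ * A₂) = (τ • A₁) * (τ • A₂) := by
    rw [smul_mul_assoc, mul_smul_comm, smul_smul, pow_two]
  have key : (B₂ * B₁ * (1 + τ ^ 2 • (A₁ * A₂))) * B₂ =
      B₂ * ((1 / 2 : ℝ) • (B₁ * (1 - τ • A₁) * (1 - τ • A₂) * B₂) +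
        (1 / 2 : ℝ) • (1 : H →L[ℝ] H)) := by
    rw [hab]
    exact dr_key (τ • A₁) (τ • A₂) B₁ B₂ hB₁ hB₂'
  intro n
  induction n with
  | zero => simp
  | succ n ih =>
    rw [pow_succ', mul_assoc, ih, ← mul_assoc, key, mul_assoc, ← pow_succ']
end

section
/- Let H be a real Hilbert space, let A₁, A₂ : H → H be bounded, self-adjoint, non-negative linear operators that commute (A₁ ∘ A₂ = A₂ ∘ A₁), let τ > 0, and let B₁, B₂ : H → H be bounded linear operators with Bℓ ∘ (I + τAℓ) = I = (I + τAℓ) ∘ Bℓ for ℓ = 1, 2. Then the operator S̃ := B₁ ∘ (I + τ² A₁A₂) ∘ B₂ is self-adjoint, and for every v ∈ H one has 0 ≤ ⟨S̃ v, v⟩ and ⟨S̃ v, v⟩ ≤ ‖v‖²; that is, 0 ≤ S̃ ≤ I in the sense of quadratic forms. -/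
open scoped InnerProductSpace

private lemma comm_of_inv {R : Type*} [Ring R] {X B Y : R}
    (h2 : X * B = 1) (h1 : B * X = 1) (h : X * Y = Y * X) : B * Y = Y * B := by
  calc B * Y = B * Y * (X * B) := by rw [h2, mul_one]
    _ = B * (Y * X) * B := by rw [← mul_assoc, mul_assoc B Y X]
    _ = B * (X * Y) * B := by rw [h]
    _ = Y * B := by rw [← mul_assoc, h1, one_mul]

set_option synthInstance.maxHeartbeats 1000000 in
set_option maxHeartbeats 1000000 in
/-- In the commuting self-adjoint case the symmetrized Douglas–Rachford operator
`S̃ = B₁ ∘ (I + τ²A₁A₂) ∘ B₂` is self-adjoint with `0 ≤ S̃ ≤ I` in the sense of quadratic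
forms. -/
theorem symmetrized_douglasRachford_selfAdjoint_nonneg_le_one
    {H : Type*} [NormedAddCommGroup H] [InnerProductSpace ℝ H] [CompleteSpace H]
    (A₁ A₂ B₁ B₂ : H →L[ℝ] H)
    (hA₁sa : ∀ v w : H, ⟪A₁ v, w⟫_ℝ = ⟪v, A₁ w⟫_ℝ)
    (hA₂sa : ∀ v w : H, ⟪A₂ v, w⟫_ℝ = ⟪v, A₂ w⟫_ℝ)
    (hA₁ : ∀ v : H, 0 ≤ ⟪A₁ v, v⟫_ℝ) (hA₂ : ∀ v : H, 0 ≤ ⟪A₂ v, v⟫_ℝ)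
    (hcomm : A₁ * A₂ = A₂ * A₁) (τ : ℝ) (hτ : 0 < τ)
    (hB₁ : B₁ * (1 + τ • A₁) = 1) (hB₁' : (1 + τ • A₁) * B₁ = 1)
    (hB₂ : B₂ * (1 + τ • A₂) = 1) (hB₂' : (1 + τ • A₂) * B₂ = 1) :
    (∀ v w : H, ⟪(B₁ * (1 + τ ^ 2 • (A₁ * A₂)) * B₂) v, w⟫_ℝ =
        ⟪v, (B₁ * (1 + τ ^ 2 • (A₁ * A₂)) * B₂) w⟫_ℝ) ∧
      (∀ v : H, 0 ≤ ⟪(B₁ * (1 + τ ^ 2 • (A₁ * A₂)) * B₂) v, v⟫_ℝ) ∧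
      (∀ v : H, ⟪(B₁ * (1 + τ ^ 2 • (A₁ * A₂)) * B₂) v, v⟫_ℝ ≤ ‖v‖ ^ 2) := by
  set M₁ : H →L[ℝ] H := 1 + τ • A₁ with hM₁
  set M₂ : H →L[ℝ] H := 1 + τ • A₂ with hM₂
  set C : H →L[ℝ] H := 1 + τ ^ 2 • (A₁ * A₂) with hC
  -- commutation facts
  have hM₁A₂ : M₁ * A₂ = A₂ * M₁ := by
    simp only [hM₁, add_mul, mul_add, one_mul, mul_one, smul_mul_assoc, mul_smul_comm, hcomm]
  have hM₂A₁ : M₂ * A₁ = A₁ * M₂ := by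
    simp only [hM₂, add_mul, mul_add, one_mul, mul_one, smul_mul_assoc, mul_smul_comm, hcomm]
  have hB₁A₂ : B₁ * A₂ = A₂ * B₁ := comm_of_inv hB₁' hB₁ hM₁A₂
  have hB₂A₁ : B₂ * A₁ = A₁ * B₂ := comm_of_inv hB₂' hB₂ hM₂A₁
  have hcp : ∀ x : H, A₁ (A₂ x) = A₂ (A₁ x) := fun x => by
    have := ContinuousLinearMap.ext_iff.mp hcomm x
    simpa using this
  have hM₁M₂ : M₁ * M₂ = M₂ * M₁ := by
    simp only [hM₁, hM₂, add_mul, mul_add, one_mul, mul_one, smul_mul_assoc, mul_smul_comm,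
      hcomm, smul_add, smul_smul]
    module
  have hB₁M₂ : B₁ * M₂ = M₂ * B₁ := comm_of_inv hB₁' hB₁ hM₁M₂
  have hB₂M₁ : B₂ * M₁ = M₁ * B₂ := comm_of_inv hB₂' hB₂ hM₁M₂.symm
  have hB₁B₂ : B₁ * B₂ = B₂ * B₁ := (comm_of_inv hB₂' hB₂ hB₁M₂.symm).symm
  have hM₁C : M₁ * C = C * M₁ := by
    have hx : A₁ * (A₁ * A₂) = A₁ * A₂ * A₁ := by
      calc A₁ * (A₁ * A₂) = A₁ * (A₂ * A₁) := by rw [hcomm]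
        _ = A₁ * A₂ * A₁ := (mul_assoc _ _ _).symm
    simp only [hM₁, hC, add_mul, mul_add, one_mul, mul_one, smul_mul_assoc, mul_smul_comm,
      smul_add, smul_smul, hx]
    module
  have hM₂C : M₂ * C = C * M₂ := by
    have hy : A₂ * (A₁ * A₂) = A₁ * A₂ * A₂ := by
      rw [← mul_assoc, ← hcomm]
    simp only [hM₂, hC, add_mul, mul_add, one_mul, mul_one, smul_mul_assoc, mul_smul_comm,
      smul_add, smul_smul, hy]
    module
  have hB₁C : B₁ * C = C * B₁ := comm_of_inv hB₁' hB₁ hM₁C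
  have hB₂C : B₂ * C = C * B₂ := comm_of_inv hB₂' hB₂ hM₂C
  -- pointwise self-adjointness of the pieces
  have hM₁sa : ∀ v w : H, ⟪M₁ v, w⟫_ℝ = ⟪v, M₁ w⟫_ℝ := by
    intro v w
    simp [hM₁, ContinuousLinearMap.add_apply, inner_add_left, inner_add_right,
      real_inner_smul_left, real_inner_smul_right, hA₁sa]
  have hM₂sa : ∀ v w : H, ⟪M₂ v, w⟫_ℝ = ⟪v, M₂ w⟫_ℝ := by
    intro v w
    simp [hM₂, ContinuousLinearMap.add_apply, inner_add_left, inner_add_right,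
      real_inner_smul_left, real_inner_smul_right, hA₂sa]
  have hB₁sa : ∀ v w : H, ⟪B₁ v, w⟫_ℝ = ⟪v, B₁ w⟫_ℝ := by
    intro v w
    have h1 : w = M₁ (B₁ w) := by
      conv_lhs => rw [show w = (1 : H →L[ℝ] H) w by simp, ← hB₁']
      simp [ContinuousLinearMap.mul_apply]
    have h2 : v = M₁ (B₁ v) := by
      conv_lhs => rw [show v = (1 : H →L[ℝ] H) v by simp, ← hB₁']
      simp [ContinuousLinearMap.mul_apply]
    calc ⟪B₁ v, w⟫_ℝ = ⟪B₁ v, M₁ (B₁ w)⟫_ℝ := by rw [← h1]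
      _ = ⟪M₁ (B₁ v), B₁ w⟫_ℝ := (hM₁sa _ _).symm
      _ = ⟪v, B₁ w⟫_ℝ := by rw [← h2]
  have hB₂sa : ∀ v w : H, ⟪B₂ v, w⟫_ℝ = ⟪v, B₂ w⟫_ℝ := by
    intro v w
    have h1 : w = M₂ (B₂ w) := by
      conv_lhs => rw [show w = (1 : H →L[ℝ] H) w by simp, ← hB₂']
      simp [ContinuousLinearMap.mul_apply]
    have h2 : v = M₂ (B₂ v) := by
      conv_lhs => rw [show v = (1 : H →L[ℝ] H) v by simp, ← hB₂']
      simp [ContinuousLinearMap.mul_apply]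
    calc ⟪B₂ v, w⟫_ℝ = ⟪B₂ v, M₂ (B₂ w)⟫_ℝ := by rw [← h1]
      _ = ⟪M₂ (B₂ v), B₂ w⟫_ℝ := (hM₂sa _ _).symm
      _ = ⟪v, B₂ w⟫_ℝ := by rw [← h2]
  have hCsa : ∀ v w : H, ⟪C v, w⟫_ℝ = ⟪v, C w⟫_ℝ := by
    intro v w
    have : ⟪A₁ (A₂ v), w⟫_ℝ = ⟪v, A₁ (A₂ w)⟫_ℝ := by
      rw [hA₁sa, hA₂sa, ← hcp]
    simp [hC, ContinuousLinearMap.add_apply, inner_add_left, inner_add_right,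
      real_inner_smul_left, real_inner_smul_right, this]
  refine ⟨?_, ?_, ?_⟩
  · -- self-adjointness
    intro v w
    have hswap : B₂ * C * B₁ = B₁ * C * B₂ := by
      rw [hB₂C, mul_assoc, hB₁B₂.symm, ← mul_assoc, ← hB₁C]
    calc ⟪(B₁ * C * B₂) v, w⟫_ℝ = ⟪B₁ (C (B₂ v)), w⟫_ℝ := by
          simp [ContinuousLinearMap.mul_apply]
      _ = ⟪C (B₂ v), B₁ w⟫_ℝ := hB₁sa _ _
      _ = ⟪B₂ v, C (B₁ w)⟫_ℝ := hCsa _ _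
      _ = ⟪v, B₂ (C (B₁ w))⟫_ℝ := hB₂sa _ _
      _ = ⟪v, (B₂ * C * B₁) w⟫_ℝ := by simp [ContinuousLinearMap.mul_apply]
      _ = ⟪v, (B₁ * C * B₂) w⟫_ℝ := by rw [hswap]
  all_goals {
  intro v
  -- pointwise application lemmas
  have hCapp : ∀ x : H, C x = x + τ ^ 2 • A₁ (A₂ x) := by
    intro x
    simp [hC, ContinuousLinearMap.add_apply, ContinuousLinearMap.smul_apply,
      ContinuousLinearMap.mul_apply, ContinuousLinearMap.one_apply]
  have hM₁app : ∀ x : H, M₁ x = x + τ • A₁ x := by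
    intro x
    simp [hM₁, ContinuousLinearMap.add_apply, ContinuousLinearMap.smul_apply,
      ContinuousLinearMap.one_apply]
  have hM₂app : ∀ x : H, M₂ x = x + τ • A₂ x := by
    intro x
    simp [hM₂, ContinuousLinearMap.add_apply, ContinuousLinearMap.smul_apply,
      ContinuousLinearMap.one_apply]
  have hM₁B₁ : ∀ x : H, M₁ (B₁ x) = x := fun x => by
    have := ContinuousLinearMap.ext_iff.mp hB₁' x
    simpa [ContinuousLinearMap.mul_apply] using this
  have hB1op : B₁ = M₂ * (B₁ * B₂) := by
    rw [← mul_assoc, ← hB₁M₂, mul_assoc, hB₂', mul_one]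
  set w : H := B₁ (B₂ v) with hw
  set a : H := A₁ w with ha
  set b : H := A₂ w with hb
  set p : H := A₁ b with hp
  set q : H := A₁ p with hq
  have hpA₂a : A₂ a = p := by rw [ha, ← hcp, hp, hb]
  have hB₂v : B₂ v = w + τ • a := by
    conv_lhs => rw [← hM₁B₁ (B₂ v)]
    rw [hM₁app, ← hw, ← ha]
  have hB₁v : B₁ v = w + τ • b := by
    conv_lhs => rw [hB1op]
    rw [ContinuousLinearMap.mul_apply, ContinuousLinearMap.mul_apply, hM₂app, ← hw, ← hb]
  have hCBv : C (B₂ v) = w + τ • a + τ ^ 2 • p + (τ ^ 2 * τ) • q := by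
    rw [hCapp, hB₂v, map_add, map_smul, hpA₂a, map_add, map_smul, ← hp, ← hq, smul_add,
      smul_smul]
    abel
  have hSv : ⟪(B₁ * C * B₂) v, v⟫_ℝ = ⟪w + τ • a + τ ^ 2 • p + (τ ^ 2 * τ) • q, w + τ • b⟫_ℝ := by
    rw [ContinuousLinearMap.mul_apply, ContinuousLinearMap.mul_apply, hB₁sa, hCBv, hB₁v]
  have hv : v = w + τ • a + τ • b + (τ * τ) • p := by
    conv_lhs => rw [← hM₁B₁ v]
    rw [hM₁app, hB₁v, map_add, map_smul, ← ha, ← hp, smul_add, smul_smul]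
    abel
  -- scalar facts
  have n1 : (0:ℝ) ≤ ⟪a, w⟫_ℝ := hA₁ w
  have n2 : (0:ℝ) ≤ ⟪b, w⟫_ℝ := hA₂ w
  have n3 : (0:ℝ) ≤ ⟪p, a⟫_ℝ := by rw [← hpA₂a]; exact hA₂ a
  have n4 : (0:ℝ) ≤ ⟪p, b⟫_ℝ := by rw [hp]; exact hA₁ b
  have r2 : ⟪p, w⟫_ℝ = ⟪b, a⟫_ℝ := by rw [hp, hA₁sa, ← ha, real_inner_comm]
  have r3 : ⟪q, w⟫_ℝ = ⟪p, a⟫_ℝ := by rw [hq, hA₁sa, ← ha]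
  have r4 : ⟪q, b⟫_ℝ = ⟪p, p⟫_ℝ := by rw [hq, hA₁sa, ← hp]
  have c1 : ⟪w, a⟫_ℝ = ⟪a, w⟫_ℝ := real_inner_comm _ _
  have c2 : ⟪w, b⟫_ℝ = ⟪b, w⟫_ℝ := real_inner_comm _ _
  have c3 : ⟪w, p⟫_ℝ = ⟪p, w⟫_ℝ := real_inner_comm _ _
  have c4 : ⟪a, b⟫_ℝ = ⟪b, a⟫_ℝ := real_inner_comm _ _
  have c5 : ⟪a, p⟫_ℝ = ⟪p, a⟫_ℝ := real_inner_comm _ _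
  have c6 : ⟪b, p⟫_ℝ = ⟪p, b⟫_ℝ := real_inner_comm _ _
  have hsq1 : (0:ℝ) ≤ ⟪w, w⟫_ℝ + 2 * τ ^ 2 * ⟪p, w⟫_ℝ + τ ^ 2 * τ ^ 2 * ⟪p, p⟫_ℝ := by
    have h0 := real_inner_self_nonneg (x := w + τ ^ 2 • p)
    simp only [inner_add_left, inner_add_right, real_inner_smul_left, real_inner_smul_right,
      c3] at h0
    linarith
  have hsq2 : (0:ℝ) ≤ ⟪a, a⟫_ℝ + 2 * ⟪b, a⟫_ℝ + ⟪b, b⟫_ℝ := by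
    have h0 := real_inner_self_nonneg (x := a + b)
    simp only [inner_add_left, inner_add_right, c4] at h0
    linarith
  have t1 : (0:ℝ) ≤ τ * ⟪a, w⟫_ℝ := mul_nonneg hτ.le n1
  have t2 : (0:ℝ) ≤ τ * ⟪b, w⟫_ℝ := mul_nonneg hτ.le n2
  have t3 : (0:ℝ) ≤ τ ^ 3 * ⟪p, a⟫_ℝ := mul_nonneg (pow_nonneg hτ.le 3) n3
  have t4 : (0:ℝ) ≤ τ ^ 3 * ⟪p, b⟫_ℝ := mul_nonneg (pow_nonneg hτ.le 3) n4
  have t5 : (0:ℝ) ≤ τ ^ 2 * (⟪a, a⟫_ℝ + 2 * ⟪b, a⟫_ℝ + ⟪b, b⟫_ℝ) :=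
    mul_nonneg (sq_nonneg τ) hsq2
  first
  | · -- lower bound
      rw [hSv]
      simp only [inner_add_left, inner_add_right, real_inner_smul_left, real_inner_smul_right,
        c1, c2, c3, c4, c5, c6, r2, r3, r4]
      nlinarith [t1, t2, t3, t4, hsq1]
  | · -- upper bound
      rw [hSv, ← real_inner_self_eq_norm_sq]
      conv_rhs => rw [hv]
      simp only [inner_add_left, inner_add_right, real_inner_smul_left, real_inner_smul_right,
        c1, c2, c3, c4, c5, c6, r2, r3, r4]
      nlinarith [t1, t2, t3, t4, t5, hsq1]
  }
end

section
/- For every natural number m ≥ 1 and every real number λ with 0 ≤ λ ≤ 1, one has |exp(−m(1 − λ)) − λ^m| ≤ 1/m. -/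
/-- `a^(m+1) - b^(m+1) ≤ (m+1) * a^m * (a - b)` for `0 ≤ b ≤ a`. -/
lemma pow_succ_sub_pow_succ_le (m : ℕ) (a b : ℝ) (hb : 0 ≤ b) (hba : b ≤ a) :
    a ^ (m + 1) - b ^ (m + 1) ≤ (m + 1 : ℝ) * a ^ m * (a - b) := by
  induction m with
  | zero => simp
  | succ n ih =>
    have ha : 0 ≤ a := hb.trans hba
    have hpow : b ^ (n + 1) ≤ a ^ (n + 1) := pow_le_pow_left₀ hb hba _
    have key : a ^ (n + 2) - b ^ (n + 2)
        = a * (a ^ (n + 1) - b ^ (n + 1)) + b ^ (n + 1) * (a - b) := by ring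
    have h1 : a * (a ^ (n + 1) - b ^ (n + 1)) ≤ a * ((n + 1 : ℝ) * a ^ n * (a - b)) :=
      mul_le_mul_of_nonneg_left ih ha
    have h2 : b ^ (n + 1) * (a - b) ≤ a ^ (n + 1) * (a - b) :=
      mul_le_mul_of_nonneg_right hpow (by linarith)
    have hcast : ((n + 1 : ℕ) + 1 : ℝ) = (n : ℝ) + 2 := by push_cast; ring
    rw [hcast]
    calc a ^ (n + 1 + 1) - b ^ (n + 1 + 1)
        ≤ a * ((n + 1 : ℝ) * a ^ n * (a - b)) + a ^ (n + 1) * (a - b) := by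
          rw [show n + 1 + 1 = n + 2 from rfl, key]; exact add_le_add h1 h2
      _ = ((n : ℝ) + 2) * a ^ (n + 1) * (a - b) := by ring

/-- `exp(−x) ≤ 1 − x + x²/2` for `x ≥ 0`. -/
lemma exp_neg_le_quadratic {x : ℝ} (hx : 0 ≤ x) : Real.exp (-x) ≤ 1 - x + x ^ 2 / 2 := by
  have hcubic : 1 + x + x ^ 2 / 2 + x ^ 3 / 6 ≤ Real.exp x := by
    have h := Real.sum_le_exp_of_nonneg hx 4
    simp [Finset.sum_range_succ, Nat.factorial] at h
    nlinarith [h]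
  have hq : (0:ℝ) ≤ 1 - x + x ^ 2 / 2 := by nlinarith [sq_nonneg (x - 1)]
  have hmul : Real.exp (-x) * Real.exp x = 1 := by
    rw [← Real.exp_add]; simp
  have hE : 0 < Real.exp x := Real.exp_pos x
  have hprod : (1:ℝ) ≤ (1 - x + x ^ 2 / 2) * Real.exp x := by
    have := mul_le_mul_of_nonneg_left hcubic hq
    nlinarith [pow_nonneg hx 3, pow_nonneg hx 4, pow_nonneg hx 5]
  nlinarith [mul_pos (Real.exp_pos (-x)) hE]

/-- For every `m ≥ 1` and `λ ∈ [0, 1]`, one has `|exp(−m(1 − λ)) − λ^m| ≤ 1/m`. -/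
theorem abs_exp_sub_pow_le (m : ℕ) (hm : 1 ≤ m) (lam : ℝ) (h0 : 0 ≤ lam) (h1 : lam ≤ 1) :
    |Real.exp (-(m : ℝ) * (1 - lam)) - lam ^ m| ≤ 1 / m := by
  obtain ⟨x, hxdef⟩ : ∃ x : ℝ, x = 1 - lam := ⟨_, rfl⟩
  rw [show (1 : ℝ) - lam = x from hxdef.symm]
  have hx0 : 0 ≤ x := by rw [hxdef]; linarith
  obtain ⟨a, hadef⟩ : ∃ a : ℝ, a = Real.exp (-x) := ⟨_, rfl⟩
  have ha0 : 0 < a := hadef ▸ Real.exp_pos _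
  have hba : lam ≤ a := by
    have h := Real.add_one_le_exp (-x)
    rw [hadef]; linarith [hxdef]
  have hexp : Real.exp (-(m : ℝ) * x) = a ^ m := by
    rw [hadef, ← Real.exp_nat_mul]; ring_nf
  have hpowle : lam ^ m ≤ a ^ m := pow_le_pow_left₀ h0 hba m
  rw [hexp, abs_of_nonneg (by linarith)]
  obtain ⟨k, rfl⟩ : ∃ k, m = k + 1 := ⟨m - 1, (Nat.succ_pred_eq_of_pos hm).symm⟩
  have hmain : a ^ (k + 1) - lam ^ (k + 1) ≤ (k + 1 : ℝ) * a ^ k * (a - lam) :=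
    pow_succ_sub_pow_succ_le k a lam h0 hba
  have hdiff : a - lam ≤ x ^ 2 / 2 := by
    have h := exp_neg_le_quadratic hx0
    have hlam : lam = 1 - x := by rw [hxdef]; ring
    rw [hadef, hlam]; linarith
  have hdnn : 0 ≤ a - lam := by linarith
  have hak : a ^ k = Real.exp (-(k : ℝ) * x) := by
    rw [hadef, ← Real.exp_nat_mul]; ring_nf
  have hk1 : (0:ℝ) < (k : ℝ) + 1 := by positivity
  have hquad : (((k : ℝ) + 1) * x) ^ 2 ≤ 2 * Real.exp ((k : ℝ) * x) := by
    have hkx : 0 ≤ (k : ℝ) * x := mul_nonneg (Nat.cast_nonneg k) hx0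
    have h := Real.quadratic_le_exp_of_nonneg hkx
    have hle : ((k : ℝ) + 1) * x ≤ (k : ℝ) * x + 1 := by nlinarith [hxdef]
    have hnn : 0 ≤ ((k : ℝ) + 1) * x := by positivity
    have hsq : (((k : ℝ) + 1) * x) ^ 2 ≤ ((k : ℝ) * x + 1) ^ 2 :=
      pow_le_pow_left₀ hnn hle 2
    nlinarith [hsq, h]
  have hek : 0 < Real.exp ((k : ℝ) * x) := Real.exp_pos _
  have hen : Real.exp (-(k : ℝ) * x) = (Real.exp ((k : ℝ) * x))⁻¹ := by
    rw [← Real.exp_neg]; ring_nf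
  have hstep : (k + 1 : ℝ) * a ^ k * (a - lam) ≤ 1 / ((k : ℝ) + 1) := by
    rw [hak, hen, le_div_iff₀ hk1]
    have key : ((k : ℝ) + 1) ^ 2 * (a - lam) ≤ Real.exp ((k : ℝ) * x) := by
      calc ((k : ℝ) + 1) ^ 2 * (a - lam)
          ≤ ((k : ℝ) + 1) ^ 2 * (x ^ 2 / 2) :=
            mul_le_mul_of_nonneg_left hdiff (by positivity)
        _ = (((k : ℝ) + 1) * x) ^ 2 / 2 := by ring
        _ ≤ Real.exp ((k : ℝ) * x) := by linarith [hquad]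
    calc ((k : ℝ) + 1) * (Real.exp ((k : ℝ) * x))⁻¹ * (a - lam) * ((k : ℝ) + 1)
        = ((k : ℝ) + 1) ^ 2 * (a - lam) * (Real.exp ((k : ℝ) * x))⁻¹ := by ring
      _ ≤ Real.exp ((k : ℝ) * x) * (Real.exp ((k : ℝ) * x))⁻¹ :=
          mul_le_mul_of_nonneg_right key (by positivity)
      _ = 1 := mul_inv_cancel₀ (ne_of_gt hek)
  push_cast
  exact hmain.trans hstep
end

section
/- Let H be a complex Hilbert space and T : H → H a bounded self-adjoint linear operator such that both T and I − T are positive (i.e. ⟨Tv, v⟩ ≥ 0 and ⟨(I − T)v, v⟩ ≥ 0 for all v). Then for every natural number m ≥ 1, ‖exp(−m • (I − T)) − T^m‖ ≤ 1/m, where exp denotes the operator exponential and the norm is the operator norm. -/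
open scoped InnerProductSpace


lemma expneg_le {s : ℝ} (hs : 0 ≤ s) : Real.exp (-s) ≤ 1 - s + s ^ 2 / 2 := by
  have h1 : 1 + s + s ^ 2 / 2 ≤ Real.exp s := Real.quadratic_le_exp_of_nonneg hs
  have hpos : (0:ℝ) < 1 + s + s ^ 2 / 2 := by positivity
  rw [Real.exp_neg]
  refine (inv_anti₀ hpos h1).trans ?_
  rw [inv_le_iff_one_le_mul₀ hpos]
  nlinarith [sq_nonneg s, sq_nonneg (s^2)]

lemma pow_sub_pow_le' {a b : ℝ} (hb : 0 ≤ b) (hba : b ≤ a) :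
    ∀ m : ℕ, a ^ m - b ^ m ≤ m * a ^ (m - 1) * (a - b) := by
  have ha : 0 ≤ a := hb.trans hba
  intro m
  induction m with
  | zero => simp
  | succ n ih =>
    rcases Nat.eq_zero_or_pos n with rfl | hn
    · simp
    · have h1 : a ^ (n+1) - b ^ (n+1) = a * (a ^ n - b ^ n) + (a - b) * b ^ n := by ring
      have h2 : a * (a ^ n - b ^ n) ≤ a * (n * a ^ (n-1) * (a - b)) :=
        mul_le_mul_of_nonneg_left ih ha
      have h3 : a * (n * a ^ (n-1) * (a-b)) = n * a ^ n * (a - b) := by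
        rw [show a * ((n:ℝ) * a ^ (n-1) * (a-b)) = (n:ℝ) * (a * a ^ (n-1)) * (a-b) by ring,
          ← pow_succ']
        congr 3
        omega
      have h4 : (a - b) * b ^ n ≤ (a - b) * a ^ n :=
        mul_le_mul_of_nonneg_left (pow_le_pow_left₀ hb hba n) (by linarith)
      have h5 : ((n+1 : ℕ) : ℝ) * a ^ ((n+1) - 1) * (a - b) = n * a ^ n * (a-b) + (a-b) * a^n := by
        push_cast [Nat.add_sub_cancel]
        ring
      rw [h1, h5]; linarith [h2.trans_eq h3]

lemma mul_exp_neg_le {u : ℝ} : u * Real.exp (-u) ≤ Real.exp (-1) := by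
  have h := Real.add_one_le_exp (u - 1)
  calc u * Real.exp (-u) ≤ Real.exp (u-1) * Real.exp (-u) := by
        have := (Real.exp_pos (-u)).le
        nlinarith
    _ = Real.exp (-1) := by rw [← Real.exp_add]; ring_nf


lemma tail_bound (m : ℕ) (hm : 1 ≤ m) {s : ℝ} (hs0 : 0 ≤ s) (hs1 : s ≤ 1) :
    (m:ℝ) * Real.exp (-((m:ℝ)-1) * s) * (s^2/2) ≤ 1/m := by
  have he1 : (2.7 : ℝ) < Real.exp 1 := by
    have := Real.exp_one_gt_d9
    norm_num at this ⊢
    linarith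
  have heK : Real.exp (-1) * Real.exp 1 = 1 := by
    rw [← Real.exp_add]; norm_num
  rcases eq_or_lt_of_le hm with h1 | h1
  · -- m = 1
    subst h1
    simp only [Nat.cast_one]
    rw [show -((1:ℝ)-1) * s = 0 by ring, Real.exp_zero]
    nlinarith
  · have hm2 : 2 ≤ m := h1
    rcases eq_or_lt_of_le hm2 with h2 | h2
    · -- m = 2
      subst h2
      simp only [Nat.cast_ofNat]
      rw [show -((2:ℝ)-1) * s = -s by ring]
      have hk := mul_exp_neg_le (u := s)
      have hE := (Real.exp_pos (-s)).le
      have hK : Real.exp (-1) ≤ 1/2 := by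
        have h2' : (2:ℝ) ≤ Real.exp 1 := by
          have := Real.add_one_le_exp (1:ℝ); linarith
        nlinarith [Real.exp_pos (-1)]
      nlinarith [mul_le_mul_of_nonneg_right (show s^2 ≤ s by nlinarith) hE]
    · -- m ≥ 3
      have hm3 : 3 ≤ m := h2
      have hm3' : (3:ℝ) ≤ m := by exact_mod_cast hm3
      have hm0' : (0:ℝ) < m := by linarith
      set c : ℝ := (m:ℝ) - 1 with hc_def
      clear_value c
      have hc2 : 2 ≤ c := by simp [hc_def]; linarith
      have hc3 : 2*(m:ℝ) ≤ 3*c := by simp [hc_def]; linarith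
      set k : ℝ := Real.exp (-(c * s / 2)) with hk_def
      clear_value k
      have hk0 : 0 ≤ k := hk_def ▸ (Real.exp_pos _).le
      have hrw : Real.exp (-c * s) = k^2 := by
        rw [hk_def, sq, ← Real.exp_add]
        congr 1
        ring
      rw [hrw, le_div_iff₀ hm0']
      have hk : c * s / 2 * k ≤ Real.exp (-1) := by
        rw [hk_def]; exact mul_exp_neg_le
      have hK' : Real.exp (-1) ≤ 1/2.7 := by
        nlinarith [Real.exp_pos (-1)]
      have h1' : (c*s/2*k)^2 ≤ Real.exp (-1)^2 :=
        pow_le_pow_left₀ (by positivity) hk 2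
      have hA : c^2*s^2*k^2 ≤ 4 * Real.exp (-1)^2 := by
        rw [show (c*s/2*k)^2 = c^2*s^2*k^2/4 from by ring] at h1'
        linarith
      have hB : Real.exp (-1)^2 ≤ (1/2.7)^2 :=
        pow_le_pow_left₀ (Real.exp_pos _).le hK' 2
      have hC : (2*(m:ℝ))^2 ≤ (3*c)^2 :=
        pow_le_pow_left₀ (by positivity) hc3 2
      have hD : (m:ℝ)^2 * (s^2*k^2) ≤ (9/4*c^2) * (s^2*k^2) :=
        mul_le_mul_of_nonneg_right (by nlinarith [hC]) (by positivity)
      nlinarith [hD, hA, hB, Real.exp_pos (-1)]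

lemma scalar_key (m : ℕ) (hm : 1 ≤ m) {x : ℝ} (hx0 : 0 ≤ x) (hx1 : x ≤ 1) :
    |Real.exp (-(m:ℝ) * (1 - x)) - x ^ m| ≤ 1 / m := by
  have hm0 : (0:ℝ) < m := by exact_mod_cast hm
  set s : ℝ := 1 - x with hs_def
  have hs0 : 0 ≤ s := by linarith
  have hs1 : s ≤ 1 := by linarith
  have hax : x ≤ Real.exp (-s) := by
    have := Real.add_one_le_exp (-s); linarith
  have hexp_pow : Real.exp (-s) ^ m = Real.exp (-(m:ℝ) * s) := by
    rw [← Real.exp_nat_mul]; ring_nf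
  have hlow : x ^ m ≤ Real.exp (-(m:ℝ) * s) := by
    rw [← hexp_pow]; exact pow_le_pow_left₀ hx0 hax m
  rw [abs_of_nonneg (by linarith)]
  have hsub : Real.exp (-s) - x ≤ s^2/2 := by
    have := expneg_le hs0; simp only [hs_def] at *; nlinarith
  have h2 : Real.exp (-s) ^ (m-1) = Real.exp (-((m:ℝ)-1) * s) := by
    rw [← Real.exp_nat_mul]
    congr 1
    push_cast [Nat.cast_sub hm]
    ring
  have key : Real.exp (-(m:ℝ) * s) - x ^ m ≤ m * Real.exp (-((m:ℝ)-1) * s) * (s^2/2) := by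
    have h := pow_sub_pow_le' hx0 hax m
    rw [hexp_pow, h2] at h
    refine h.trans ?_
    have hEpos : (0:ℝ) ≤ (m:ℝ) * Real.exp (-((m:ℝ)-1) * s) := by positivity
    exact mul_le_mul_of_nonneg_left hsub hEpos
  refine key.trans ?_
  exact tail_bound m hm hs0 hs1

/-- If `T` is a bounded self-adjoint operator on a complex Hilbert space with both `T` and
`I − T` positive, then `‖exp(−m • (I − T)) − T^m‖ ≤ 1/m` for every `m ≥ 1`. -/
theorem norm_exp_sub_pow_le
    {H : Type*} [NormedAddCommGroup H] [InnerProductSpace ℂ H] [CompleteSpace H]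
    (T : H →L[ℂ] H) (hT : IsSelfAdjoint T)
    (hpos : ∀ v : H, 0 ≤ (⟪T v, v⟫_ℂ).re)
    (hpos' : ∀ v : H, 0 ≤ (⟪(1 - T : H →L[ℂ] H) v, v⟫_ℂ).re)
    (m : ℕ) (hm : 1 ≤ m) :
    ‖NormedSpace.exp (-(m : ℂ) • (1 - T : H →L[ℂ] H)) - T ^ m‖ ≤ 1 / m := by
  have hT0 : (0 : H →L[ℂ] H) ≤ T := by
    rw [ContinuousLinearMap.nonneg_iff_isPositive]
    exact ⟨ContinuousLinearMap.isSelfAdjoint_iff_isSymmetric.mp hT, fun x => hpos x⟩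
  have h1sa : IsSelfAdjoint (1 - T : H →L[ℂ] H) := (IsSelfAdjoint.one _).sub hT
  have hT1 : (0 : H →L[ℂ] H) ≤ 1 - T := by
    rw [ContinuousLinearMap.nonneg_iff_isPositive]
    exact ⟨ContinuousLinearMap.isSelfAdjoint_iff_isSymmetric.mp h1sa, fun x => hpos' x⟩
  have hsp0 : ∀ x ∈ spectrum ℝ T, 0 ≤ x :=
    (StarOrderedRing.nonneg_iff_spectrum_nonneg (R := ℝ) T hT).mp hT0
  have hOne : cfc (fun x : ℝ => 1 - x) T = 1 - T := by
    rw [cfc_sub (fun _ => (1:ℝ)) (fun x => x) T (by fun_prop) (by fun_prop),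
      cfc_const_one ℝ T hT, cfc_id' ℝ T hT]
  have hsp1 : ∀ x ∈ spectrum ℝ T, x ≤ 1 := by
    intro x hx
    have := (cfc_nonneg_iff (fun x : ℝ => 1 - x) T (by fun_prop) hT).mp
      (hOne ▸ hT1) x hx
    linarith
  -- rewrite exponential via cfc
  have hsmul : (-(m : ℂ)) • (1 - T : H →L[ℂ] H) = (-(m:ℝ)) • (1 - T : H →L[ℂ] H) := by
    rw [← Complex.coe_smul]
    norm_num
  have harg : cfc (fun x : ℝ => -(m:ℝ) * (1 - x)) T = (-(m:ℝ)) • (1 - T : H →L[ℂ] H) := by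
    calc cfc (fun x : ℝ => -(m:ℝ) * (1 - x)) T
        = cfc (fun x : ℝ => -(m:ℝ) • ((fun y : ℝ => 1 - y) x)) T := by
          simp [smul_eq_mul]
      _ = (-(m:ℝ)) • cfc (fun y : ℝ => 1 - y) T := cfc_smul _ _ T
      _ = (-(m:ℝ)) • (1 - T : H →L[ℂ] H) := by rw [hOne]
  have hexp : NormedSpace.exp ((-(m : ℂ)) • (1 - T : H →L[ℂ] H))
      = cfc (fun x : ℝ => Real.exp (-(m:ℝ) * (1 - x))) T := by
    rw [hsmul, ← harg,
      ← CFC.real_exp_eq_normedSpace_exp (cfc_predicate _ T),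
      ← cfc_comp' Real.exp (fun x : ℝ => -(m:ℝ) * (1 - x)) T (by fun_prop) (by fun_prop)]
  have hpow : (T : H →L[ℂ] H) ^ m = cfc (fun x : ℝ => x ^ m) T := (cfc_pow_id T m hT).symm
  rw [hexp, hpow,
    ← cfc_sub (fun x : ℝ => Real.exp (-(m:ℝ) * (1 - x))) (fun x : ℝ => x ^ m) T
      (by fun_prop) (by fun_prop)]
  refine norm_cfc_le (by positivity) fun x hx => ?_
  rw [Real.norm_eq_abs]
  exact scalar_key m hm (hsp0 x hx) (hsp1 x hx)
end

section
/- Let H be a complex Hilbert space and let A : H → H be a bounded self-adjoint linear operator that is coercive, i.e. there exists c > 0 with ⟨Av, v⟩ ≥ c‖v‖² for all v ∈ H (so that A is positive and invertible, with inverse A^{-1}). For ζ ∈ [0, 1] let A^{−ζ} denote the fractional power of A defined by the continuous functional calculus (applying the function x ↦ x^{−ζ} to A). Then for every bounded linear operator B : H → H, ‖B ∘ A^{−ζ}‖ ≤ ‖B ∘ A^{-1}‖^{ζ} · ‖B‖^{1−ζ}. -/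
open scoped InnerProductSpace

open NormedSpace Complex

set_option maxHeartbeats 1000000

/-- Interpolation (moment) inequality: if `A` is a bounded self-adjoint coercive operator on a
complex Hilbert space with bounded inverse `Ainv`, and `A^{−ζ}` is defined via the continuous
functional calculus, then `‖B ∘ A^{−ζ}‖ ≤ ‖B ∘ A⁻¹‖^ζ · ‖B‖^{1−ζ}` for every bounded `B` and
`ζ ∈ [0, 1]`. -/
theorem interpolation_fractional_power_bound
    {H : Type*} [NormedAddCommGroup H] [InnerProductSpace ℂ H] [CompleteSpace H]
    (A Ainv B : H →L[ℂ] H) (hA : IsSelfAdjoint A)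
    (c : ℝ) (hc : 0 < c) (hcoer : ∀ v : H, c * ‖v‖ ^ 2 ≤ (⟪A v, v⟫_ℂ).re)
    (hinv₁ : Ainv * A = 1) (hinv₂ : A * Ainv = 1)
    (ζ : ℝ) (hζ0 : 0 ≤ ζ) (hζ1 : ζ ≤ 1) :
    ‖B * cfc (fun x : ℝ => x ^ (-ζ)) A‖ ≤ ‖B * Ainv‖ ^ ζ * ‖B‖ ^ (1 - ζ) := by
  rcases subsingleton_or_nontrivial H with hH | hH
  · have h0 : (B * cfc (fun x : ℝ => x ^ (-ζ)) A) = 0 := Subsingleton.elim _ _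
    rw [h0, norm_zero]
    positivity
  have hnt : Nontrivial (H →L[ℂ] H) := by
    obtain ⟨x, hx⟩ := exists_ne (0 : H)
    exact ⟨1, 0, fun h => hx (by simpa using ContinuousLinearMap.ext_iff.mp h x)⟩
  -- the spectrum of `A` is contained in `[c, ∞)`
  have hsa : IsSelfAdjoint (A - algebraMap ℝ (H →L[ℂ] H) c) :=
    hA.sub ((IsSelfAdjoint.all c).algebraMap _)
  have hpos : (0 : H →L[ℂ] H) ≤ A - algebraMap ℝ (H →L[ℂ] H) c := by
    rw [ContinuousLinearMap.nonneg_iff_isPositive]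
    refine ⟨ContinuousLinearMap.isSelfAdjoint_iff_isSymmetric.mp hsa, fun v => ?_⟩
    have happ : (A - algebraMap ℝ (H →L[ℂ] H) c) v = A v - c • v := by
      simp [Algebra.algebraMap_eq_smul_one]
    rw [ContinuousLinearMap.reApplyInnerSelf_apply, happ]
    have h1 : ⟪A v - c • v, v⟫_ℂ = ⟪A v, v⟫_ℂ - (c : ℂ) * ⟪v, v⟫_ℂ := by
      rw [inner_sub_left, show ((c : ℝ) • v : H) = ((c : ℝ) : ℂ) • v from (Complex.coe_smul c v).symm,
        inner_smul_left]
      norm_num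
    have hvv : (⟪v, v⟫_ℂ).re = ‖v‖ ^ 2 := by
      rw [← RCLike.re_to_complex]
      exact inner_self_eq_norm_sq v
    have him : (⟪v, v⟫_ℂ).im = 0 := by
      rw [← RCLike.im_to_complex]
      exact inner_self_im v
    simp only [RCLike.re_to_complex, h1, Complex.sub_re, Complex.mul_re, Complex.ofReal_re,
      Complex.ofReal_im, hvv, him]
    nlinarith [hcoer v]
  have hspec : ∀ x ∈ spectrum ℝ A, c ≤ x := by
    intro x hx
    have h1 := (StarOrderedRing.nonneg_iff_spectrum_nonneg (R := ℝ) _ hsa).mp hpos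
    have hmem : x - c ∈ spectrum ℝ (A - algebraMap ℝ (H →L[ℂ] H) c) := by
      rw [← spectrum.sub_singleton_eq]
      exact Set.sub_mem_sub hx rfl
    linarith [h1 _ hmem]
  have hspec_pos : ∀ x ∈ spectrum ℝ A, 0 < x := fun x hx => lt_of_lt_of_le hc (hspec x hx)
  have hlogcont : ContinuousOn Real.log (spectrum ℝ A) :=
    Real.continuousOn_log.mono fun x hx => by
      simp [ne_of_gt (hspec_pos x hx)]
  -- the logarithm of `A`
  set L : H →L[ℂ] H := cfc Real.log A with hLdef
  have hL : IsSelfAdjoint L := cfc_predicate _ _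
  -- key identity: complex exponentials of real multiples of `L` are fractional powers of `A`
  have key : ∀ t : ℝ, NormedSpace.exp ((t : ℂ) • L) = cfc (fun x : ℝ => x ^ t) A := by
    intro t
    have h1 : ((t : ℝ) : ℂ) • L = t • L := by
      rw [← smul_one_smul ℂ (t : ℝ) L, Complex.real_smul, mul_one]
    have hsm : IsSelfAdjoint (t • L) := by
      rw [IsSelfAdjoint, star_smul, star_trivial, hL.star_eq]
    rw [h1, ← CFC.real_exp_eq_normedSpace_exp hsm]
    rw [hLdef, ← cfc_smul t Real.log A hlogcont,
      ← cfc_comp' Real.exp (fun x => t • Real.log x) A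
        Real.continuous_exp.continuousOn (hlogcont.const_smul t)]
    exact cfc_congr fun x hx => by
      rw [Real.rpow_def_of_pos (hspec_pos x hx), smul_eq_mul, mul_comm]
  set M : H →L[ℂ] H := -L with hMdef
  have hMsa : IsSelfAdjoint M := hL.neg
  have hcoeM : ∀ t : ℝ, ((t : ℝ) : ℂ) • M = ((-t : ℝ) : ℂ) • L := by
    intro t
    push_cast
    rw [hMdef, neg_smul, smul_neg]
  have hskew : ∀ r : ℝ, ((r : ℂ) * I) • M ∈ skewAdjoint (H →L[ℂ] H) := by
    intro r
    rw [skewAdjoint.mem_iff, star_smul, hMsa.star_eq]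
    rw [show star ((r : ℂ) * I) = -((r : ℂ) * I) by
      simp [Complex.star_def, Complex.conj_I, mul_neg]]
    rw [neg_smul]
  letI : NormedAlgebra ℚ (H →L[ℂ] H) := NormedAlgebra.restrictScalars ℚ ℂ _
  have hU : ∀ (X : H →L[ℂ] H) (r : ℝ), ‖X * NormedSpace.exp (((r : ℂ) * I) • M)‖ = ‖X‖ := fun X r =>
    CStarRing.norm_mul_mem_unitary X (exp_mem_unitary_of_mem_skewAdjoint (hskew r))
  have hsplit : ∀ z : ℂ, NormedSpace.exp (z • M) =
      NormedSpace.exp ((z.re : ℂ) • M) * NormedSpace.exp (((z.im : ℂ) * I) • M) := by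
    intro z
    rw [← exp_add_of_commute (((Commute.refl M).smul_left _).smul_right _)]
    rw [← add_smul, Complex.re_add_im]
  set f : ℂ → (H →L[ℂ] H) := fun z => B * NormedSpace.exp (z • M) with hfdef
  have hnorm_f : ∀ z : ℂ, ‖f z‖ = ‖B * NormedSpace.exp ((z.re : ℂ) • M)‖ := by
    intro z
    show ‖B * NormedSpace.exp (z • M)‖ = _
    rw [hsplit z, ← mul_assoc, hU]
  have hf_cfc : ∀ r : ℝ, B * NormedSpace.exp (((r : ℝ) : ℂ) • M) = B * cfc (fun x : ℝ => x ^ (-r)) A := by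
    intro r
    rw [hcoeM r, key (-r)]
  -- differentiability
  have hdiff : Differentiable ℂ f := fun z =>
    ((hasDerivAt_exp_smul_const (𝕂 := ℂ) M z).differentiableAt.const_mul B)
  have hd : DiffContOnCl ℂ f (Complex.HadamardThreeLines.verticalStrip 0 1) :=
    hdiff.diffContOnCl
  -- uniform bound on the closed strip
  have hcfc_bound : ∀ r : ℝ, 0 ≤ r → r ≤ 1 → ‖cfc (fun x : ℝ => x ^ (-r)) A‖ ≤ max 1 c⁻¹ := by
    intro r hr0 hr1
    refine norm_cfc_le (by positivity) fun x hx => ?_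
    have hxpos := hspec_pos x hx
    rw [Real.norm_eq_abs, _root_.abs_of_nonneg (Real.rpow_nonneg hxpos.le _)]
    have h2 : x ^ (-r) = (x⁻¹) ^ r := by
      rw [Real.rpow_neg hxpos.le, ← Real.inv_rpow hxpos.le]
    rw [h2]
    calc (x⁻¹) ^ r ≤ (max 1 c⁻¹) ^ r := by
          apply Real.rpow_le_rpow (by positivity)
          · exact le_trans (inv_anti₀ hc (hspec x hx)) (le_max_right _ _)
          · exact hr0
      _ ≤ (max 1 c⁻¹) ^ (1 : ℝ) :=
          Real.rpow_le_rpow_of_exponent_le (le_max_left _ _) hr1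
      _ = max 1 c⁻¹ := Real.rpow_one _
  have hBdd : BddAbove ((norm ∘ f) '' Complex.HadamardThreeLines.verticalClosedStrip 0 1) := by
    refine ⟨‖B‖ * max 1 c⁻¹, ?_⟩
    rintro - ⟨z, hz, rfl⟩
    have hz' : z.re ∈ Set.Icc (0 : ℝ) 1 := hz
    calc (norm ∘ f) z = ‖B * NormedSpace.exp ((z.re : ℂ) • M)‖ := hnorm_f z
      _ = ‖B * cfc (fun x : ℝ => x ^ (-z.re)) A‖ := by rw [hf_cfc z.re]
      _ ≤ ‖B‖ * ‖cfc (fun x : ℝ => x ^ (-z.re)) A‖ := norm_mul_le _ _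
      _ ≤ ‖B‖ * max 1 c⁻¹ := by
          have := hcfc_bound z.re hz'.1 hz'.2
          gcongr
  -- edge bounds
  have ha : ∀ z ∈ Complex.re ⁻¹' {0}, ‖f z‖ ≤ ‖B‖ := by
    intro z hz
    have hz0 : z.re = 0 := hz
    rw [hnorm_f z, hz0]
    simp
  have hAinv_cfc : cfc (fun x : ℝ => x ^ (-(1 : ℝ))) A = Ainv := by
    have hinvcont : ContinuousOn (fun x : ℝ => x⁻¹) (spectrum ℝ A) :=
      continuousOn_id.inv₀ fun x hx => ne_of_gt (hspec_pos x hx)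
    have h1 : cfc (fun x : ℝ => x ^ (-(1 : ℝ))) A = cfc (fun x : ℝ => x⁻¹) A :=
      cfc_congr fun x hx => Real.rpow_neg_one x
    have h2 : cfc (fun x : ℝ => x⁻¹) A * A = 1 := by
      nth_rewrite 2 [show A = cfc (id : ℝ → ℝ) A from (cfc_id ℝ A hA).symm]
      rw [← cfc_mul _ _ A hinvcont continuousOn_id]
      rw [cfc_congr (g := fun _ : ℝ => (1 : ℝ)) fun x hx => by
        have hx0 : x ≠ 0 := ne_of_gt (hspec_pos x hx)
        simp [inv_mul_cancel₀ hx0]]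
      exact cfc_const_one ℝ A
    have : cfc (fun x : ℝ => x⁻¹) A = Ainv := by
      calc cfc (fun x : ℝ => x⁻¹) A = cfc (fun x : ℝ => x⁻¹) A * (A * Ainv) := by
            rw [hinv₂, mul_one]
        _ = (cfc (fun x : ℝ => x⁻¹) A * A) * Ainv := by rw [mul_assoc]
        _ = Ainv := by rw [h2, one_mul]
    rw [h1, this]
  have hb : ∀ z ∈ Complex.re ⁻¹' {1}, ‖f z‖ ≤ ‖B * Ainv‖ := by
    intro z hz
    have hz1 : z.re = 1 := hz
    rw [hnorm_f z, hz1]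
    rw [show ((1 : ℝ) : ℂ) = (((1 : ℝ) : ℝ) : ℂ) by norm_num, hf_cfc 1, hAinv_cfc]
  -- apply the Hadamard three-lines theorem
  have hz : (ζ : ℂ) ∈ Complex.HadamardThreeLines.verticalClosedStrip 0 1 := by
    simpa [Complex.HadamardThreeLines.verticalClosedStrip] using ⟨hζ0, hζ1⟩
  have hmain := Complex.HadamardThreeLines.norm_le_interp_of_mem_verticalClosedStrip'
    zero_lt_one hz hd hBdd ha hb
  rw [Complex.ofReal_re, sub_zero, sub_zero, div_one] at hmain
  have hfζ : f (ζ : ℂ) = B * cfc (fun x : ℝ => x ^ (-ζ)) A := hf_cfc ζ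
  rw [hfζ] at hmain
  calc ‖B * cfc (fun x : ℝ => x ^ (-ζ)) A‖ ≤ ‖B‖ ^ (1 - ζ) * ‖B * Ainv‖ ^ ζ := hmain
    _ = ‖B * Ainv‖ ^ ζ * ‖B‖ ^ (1 - ζ) := mul_comm _ _
end

section
/- Let H be a real Hilbert space, let A : H → H be a bounded non-negative linear operator, and let t ≥ 0. Then for every v ∈ H, ‖exp(−t • A) v + t · A(exp(−t • A) v) − v‖ ≤ (t²/2) · ‖A(Av)‖. -/
set_option linter.unusedSectionVars false

open scoped InnerProductSpace

open NormedSpace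

section Aux

variable {H : Type*} [NormedAddCommGroup H] [InnerProductSpace ℝ H] [CompleteSpace H]

set_option synthInstance.maxHeartbeats 1000000 in
/-- `A` commutes with `exp (r • (-A))`. -/
lemma exp_comm_apply (A : H →L[ℝ] H) (r : ℝ) (w : H) :
    NormedSpace.exp (r • (-A)) (A w) = A (NormedSpace.exp (r • (-A)) w) := by
  have hc : Commute A (r • (-A)) := ((Commute.refl A).neg_right).smul_right r
  have h : Commute A (NormedSpace.exp (r • (-A))) := hc.exp_right
  have := congrArg (fun (T : H →L[ℝ] H) => T w) h.eq
  simpa [ContinuousLinearMap.mul_apply] using this.symm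

lemma exp_apply_hasDerivAt (A : H →L[ℝ] H) (v : H) (r : ℝ) :
    HasDerivAt (fun s : ℝ => NormedSpace.exp (s • (-A)) v) (-(NormedSpace.exp (r • (-A)) (A v))) r := by
  have h := hasDerivAt_exp_smul_const (𝕂 := ℝ) (-A) r
  have h2 := ((ContinuousLinearMap.apply ℝ H v).hasFDerivAt).comp_hasDerivAt r h
  simpa [ContinuousLinearMap.mul_apply, Function.comp_def] using h2

lemma exp_apply_continuous (A : H →L[ℝ] H) (v : H) :
    Continuous (fun s : ℝ => NormedSpace.exp (s • (-A)) v) := by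
  have : Differentiable ℝ (fun s : ℝ => NormedSpace.exp (s • (-A)) v) :=
    fun r => (exp_apply_hasDerivAt A v r).differentiableAt
  exact this.continuous

/-- Contractivity of the semigroup generated by `-A` for non-negative `A`. -/
lemma exp_contraction (A : H →L[ℝ] H) (hA : ∀ v : H, 0 ≤ ⟪A v, v⟫_ℝ)
    {r : ℝ} (hr : 0 ≤ r) (w : H) :
    ‖NormedSpace.exp (r • (-A)) w‖ ≤ ‖w‖ := by
  set u : ℝ → H := fun s => NormedSpace.exp (s • (-A)) w with hu
  have hud : ∀ s : ℝ, HasDerivAt u (-(A (u s))) s := by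
    intro s
    have := exp_apply_hasDerivAt A w s
    rwa [exp_comm_apply] at this
  set φ : ℝ → ℝ := fun s => ⟪u s, u s⟫_ℝ with hφ
  have hφd : ∀ s : ℝ, HasDerivAt φ (-(2 * ⟪A (u s), u s⟫_ℝ)) s := by
    intro s
    have := (hud s).inner ℝ (hud s)
    refine this.congr_deriv ?_
    rw [inner_neg_left, inner_neg_right, real_inner_comm (u s) (A (u s))]
    ring
  have hanti : Antitone φ := by
    apply antitone_of_deriv_nonpos
    · exact fun s => (hφd s).differentiableAt
    · intro s
      rw [(hφd s).deriv]
      have := hA (u s)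
      linarith
  have h0 : φ 0 = ‖w‖ ^ 2 := by
    simp [hφ, hu, exp_zero, real_inner_self_eq_norm_sq]
  have hr2 : φ r ≤ ‖w‖ ^ 2 := h0 ▸ hanti hr
  have : ‖u r‖ ^ 2 ≤ ‖w‖ ^ 2 := by
    have h3 : ⟪u r, u r⟫_ℝ ≤ ‖w‖ ^ 2 := hr2
    rwa [real_inner_self_eq_norm_sq] at h3
  nlinarith [norm_nonneg (u r), norm_nonneg w]

end Aux

/-- Second-order Taylor bound for the semigroup generated by a bounded non-negative operator:
`‖exp(−tA)v + t·A(exp(−tA)v) − v‖ ≤ (t²/2)·‖A(Av)‖` for `t ≥ 0`. -/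
theorem exp_neg_nonneg_second_order_bound
    {H : Type*} [NormedAddCommGroup H] [InnerProductSpace ℝ H] [CompleteSpace H]
    (A : H →L[ℝ] H) (hA : ∀ v : H, 0 ≤ ⟪A v, v⟫_ℝ) (t : ℝ) (ht : 0 ≤ t) :
    ∀ v : H,
      ‖NormedSpace.exp (-(t • A)) v + t • A (NormedSpace.exp (-(t • A)) v) - v‖ ≤
        t ^ 2 / 2 * ‖A (A v)‖ := by
  intro v
  set u : ℝ → H := fun s => NormedSpace.exp (s • (-A)) v with hu
  set g : ℝ → H := fun s => u s + s • A (u s) - v with hg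
  have hud : ∀ s : ℝ, HasDerivAt u (-(NormedSpace.exp (s • (-A)) (A v))) s :=
    exp_apply_hasDerivAt A v
  have hgd : ∀ s : ℝ, HasDerivAt g (-(s • NormedSpace.exp (s • (-A)) (A (A v)))) s := by
    intro s
    have h1 : HasDerivAt (fun s : ℝ => A (u s)) (A (-(NormedSpace.exp (s • (-A)) (A v)))) s :=
      (A.hasFDerivAt).comp_hasDerivAt s (hud s)
    have h2 : HasDerivAt (fun s : ℝ => s • A (u s))
        (s • A (-(NormedSpace.exp (s • (-A)) (A v))) + (1 : ℝ) • A (u s)) s :=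
      (hasDerivAt_id s).smul h1
    have h3 := ((hud s).add h2).sub_const v
    refine HasDerivAt.congr_deriv (f := g) h3 ?_
    have hc1 : NormedSpace.exp (s • (-A)) (A v) = A (u s) := exp_comm_apply A s v
    have hc2 : NormedSpace.exp (s • (-A)) (A (A v)) = A (A (u s)) := by
      rw [exp_comm_apply A s (A v), hc1]
    rw [hc2, hc1]
    simp only [map_neg, smul_neg, one_smul]
    abel
  have hcont : Continuous (fun s : ℝ => -(s • NormedSpace.exp (s • (-A)) (A (A v)))) :=
    (continuous_id.smul (exp_apply_continuous A (A (A v)))).neg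
  have hint : ∫ s in (0:ℝ)..t, -(s • NormedSpace.exp (s • (-A)) (A (A v))) = g t - g 0 :=
    intervalIntegral.integral_eq_sub_of_hasDerivAt (fun s _ => hgd s)
      (hcont.intervalIntegrable 0 t)
  have hg0 : g 0 = 0 := by simp [hg, hu, exp_zero]
  have hbound : ‖g t‖ ≤ t ^ 2 / 2 * ‖A (A v)‖ := by
    rw [show g t = ∫ s in (0:ℝ)..t, -(s • NormedSpace.exp (s • (-A)) (A (A v))) by
      rw [hint, hg0, sub_zero]]
    have hle : ∀ s ∈ Set.Ioc (0:ℝ) t,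
        ‖-(s • NormedSpace.exp (s • (-A)) (A (A v)))‖ ≤ s * ‖A (A v)‖ := by
      intro s hs
      rw [norm_neg, norm_smul, Real.norm_eq_abs, abs_of_pos hs.1]
      exact mul_le_mul_of_nonneg_left (exp_contraction A hA hs.1.le _) hs.1.le
    have h1 : ‖∫ s in (0:ℝ)..t, -(s • NormedSpace.exp (s • (-A)) (A (A v)))‖ ≤
        |∫ s in (0:ℝ)..t, s * ‖A (A v)‖| := by
      refine (intervalIntegral.norm_integral_le_of_norm_le ht ?_ ?_).trans (le_abs_self _)
      · filter_upwards with s hs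
        exact hle s hs
      · exact ((continuous_id.mul continuous_const).intervalIntegrable 0 t)
    have h2 : ∫ s in (0:ℝ)..t, s * ‖A (A v)‖ = t ^ 2 / 2 * ‖A (A v)‖ := by
      rw [intervalIntegral.integral_mul_const, integral_id]
      ring
    rw [h2] at h1
    rwa [abs_of_nonneg (by positivity)] at h1
  have hrw : -(t • A) = t • (-A) := by rw [smul_neg]
  rw [hrw]
  exact hbound
end
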